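/- A weak higher dimensional transition system X is a higher dimensional transition system (i.e. satisfies CSA1 and the Unique intermediate state axiom) if and only if X is orthogonal to the canonical morphisms D[a] → C_1[a] for all a ∈ Σ and to the inclusions C_n[a_1,…,a_n]^ext ⊆ C_n[a_1,…,a_n] for all n ≥ 2 and a_1,…,a_n ∈ Σ. -/

import Mathlib

variable {S L Λ : Type*}

/-- The Multiset axiom: the set of transitions is closed under permutations of
the list of actions. -/
def MultisetAxiom (T : S → List L → S → Prop) : Prop :=
  ∀ (α β : S) (l l' : List L), l.Perm l' → T α l β → T α l' β

/-- The Coherence axiom. -/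
def CoherenceAxiom (T : S → List L → S → Prop) : Prop :=
  ∀ (α β ν₁ ν₂ : S) (l₁ l₂ l₃ : List L), l₁ ≠ [] → l₂ ≠ [] → l₃ ≠ [] →
    T α (l₁ ++ l₂ ++ l₃) β → T α l₁ ν₁ → T ν₁ (l₂ ++ l₃) β →
    T α (l₁ ++ l₂) ν₂ → T ν₂ l₃ β → T ν₁ l₂ ν₂

/-- The first Cattani-Sassone axiom. -/
def CSA1 (μ : L → Λ) (T : S → List L → S → Prop) : Prop :=
  ∀ (α β : S) (u u' : L), T α [u] β → T α [u'] β → μ u = μ u' → u = u'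

/-- The Unique intermediate state axiom. -/
def UniqueIntermediate (T : S → List L → S → Prop) : Prop :=
  ∀ (α β : S) (l₁ l₂ : List L), l₁ ≠ [] → l₂ ≠ [] → T α (l₁ ++ l₂) β →
    ∃! ν, T α l₁ ν ∧ T ν l₂ β
universe u u1 u2 u3 u4 u5 u6

/-- A transition structure over the set of labels `Λ`: a set of states `S`, a
set of actions `L`, a labelling map `μ : L → Λ`, and a set of transitions
`(α, u_1, …, u_n, β)` encoded as `T α [u_1, …, u_n] β`. Weak higher dimensional
transition systems are the transition structures whose transitions have
nonempty lists of actions and satisfying the Multiset and Coherence axioms. -/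
structure TransSys (Λ : Type u) where
  /-- the states -/
  S : Type u1
  /-- the actions -/
  L : Type u2
  /-- the labelling map -/
  μ : L → Λ
  /-- the transitions -/
  T : S → List L → S → Prop

/-- A morphism of (weak higher dimensional) transition systems: a pair of set
maps on states and actions commuting with the labelling maps and taking
transitions to transitions. -/
structure TransSys.Hom {Λ : Type u} (X : TransSys.{u, u1, u2} Λ)
    (Y : TransSys.{u, u3, u4} Λ) where
  /-- the map on states -/
  f0 : X.S → Y.S
  /-- the map on actions -/
  fa : X.L → Y.L
  label : ∀ x, Y.μ (fa x) = X.μ x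
  map : ∀ (α : X.S) (l : List X.L) (β : X.S), X.T α l β → Y.T (f0 α) (l.map fa) (f0 β)

/-- Composition of morphisms of transition systems. -/
def TransSys.Hom.comp {Λ : Type u} {X : TransSys.{u, u1, u2} Λ}
    {Y : TransSys.{u, u3, u4} Λ} {Z : TransSys.{u, u5, u6} Λ}
    (g : Y.Hom Z) (f : X.Hom Y) : X.Hom Z where
  f0 := fun x => g.f0 (f.f0 x)
  fa := fun x => g.fa (f.fa x)
  label := fun x => (g.label (f.fa x)).trans (f.label x)
  map := fun α l β h => by
    have h2 := g.map _ _ _ (f.map α l β h)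
    rw [List.map_map] at h2
    exact h2

/-- The set of transitions of the cube `C_n[a_1,…,a_n]`: the states are the
elements of `{0,1}^n`, the actions are the indices `i ∈ {1,…,n}` (the action
`i` standing for the pair `(a_i, i)`, labelled by `a_i`). -/
@[reducible] def CubeT (n : ℕ) (ε : Fin n → Bool) (l : List (Fin n)) (ε' : Fin n → Bool) :
    Prop :=
  l ≠ [] ∧ l.Nodup ∧ (∀ i, ε i ≤ ε' i) ∧ ∀ i : Fin n, ε i ≠ ε' i ↔ i ∈ l

/-- The cube `C_n[a_1,…,a_n]` as a (weak higher dimensional) transition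
system. -/
@[reducible] def cube {Λ : Type u} (n : ℕ) (a : Fin n → Λ) : TransSys.{u, 0, 0} Λ where
  S := Fin n → Bool
  L := Fin n
  μ := a
  T := CubeT n
/-- The sub-system `C_n[a_1,…,a_n]^ext`: its states are `0_n` and `1_n`, its
actions are those of the cube, and its transitions are the tuples
`(0_n, (a_{σ(1)},σ(1)), …, (a_{σ(n)},σ(n)), 1_n)` for `σ` a permutation of
`{1,…,n}`, i.e. the nonempty lists of indices without repetition containing
every index. -/
@[reducible] def cubeExt {Λ : Type u} (n : ℕ) (a : Fin n → Λ) : TransSys.{u, 0, 0} Λ where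
  S := {ε : Fin n → Bool // ε = (fun _ => false) ∨ ε = (fun _ => true)}
  L := Fin n
  μ := a
  T := fun x l y => x.1 = (fun _ => false) ∧ y.1 = (fun _ => true) ∧
    l ≠ [] ∧ l.Nodup ∧ ∀ i : Fin n, i ∈ l

/-- The inclusion `C_n[a_1,…,a_n]^ext ⊆ C_n[a_1,…,a_n]`. -/
def extIncl {Λ : Type u} (n : ℕ) (a : Fin n → Λ) : (cubeExt n a).Hom (cube n a) where
  f0 := Subtype.val
  fa := id
  label := fun _ => rfl
  map := fun x l y h => by
    obtain ⟨hx, hy, hne, hnd, hall⟩ := h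
    rw [List.map_id, hx, hy]
    exact ⟨hne, hnd, fun i => by simp, fun i => by simpa using hall i⟩
/-- The weak higher dimensional transition system `D[a]`: two states `0` and
`1` (encoded by `false` and `true`), two actions `(a,1)` and `(a,2)` (encoded
by `false` and `true`) both labelled by `a`, and the two transitions
`(0,(a,1),1)` and `(0,(a,2),1)`. -/
@[reducible] def dSys {Λ : Type u} (a : Λ) : TransSys.{u, 0, 0} Λ where
  S := Bool
  L := Bool
  μ := fun _ => a
  T := fun α l β => α = false ∧ β = true ∧ (l = [false] ∨ l = [true])

/-- The canonical morphism `D[a] → C_1[a]`: the identity on states, sending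
both actions to the unique action `(a,1)` of `C_1[a]`. -/
def dToC {Λ : Type u} (a : Λ) : (dSys a).Hom (cube 1 (fun _ => a)) where
  f0 := fun b _ => b
  fa := fun _ => 0
  label := fun _ => rfl
  map := fun α l β h => by
    obtain ⟨hα, hβ, hl⟩ := h
    subst hα; subst hβ
    have hmap : l.map (fun _ : Bool => (0 : Fin 1)) = [0] := by
      rcases hl with h | h <;> subst h <;> rfl
    rw [hmap]
    exact ⟨by simp, by simp, fun i => by simp, fun i => by simp [Fin.eq_zero i]⟩


theorem TransSys.Hom.ext' {Λ : Type u} {X : TransSys.{u, u1, u2} Λ} {Y : TransSys.{u, u3, u4} Λ}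
    {f g : X.Hom Y} (h0 : f.f0 = g.f0) (ha : f.fa = g.fa) : f = g := by
  cases f; cases g; cases h0; cases ha; rfl

theorem list_fin_one (l : List (Fin 1)) (h1 : l ≠ []) (h2 : l.Nodup) : l = [0] := by
  cases l with
  | nil => exact absurd rfl h1
  | cons x t =>
    cases t with
    | nil => simp [Subsingleton.elim x 0]
    | cons y t' =>
      exfalso
      simp [List.nodup_cons] at h2
      exact h2.1.1 (Subsingleton.elim x y)

theorem dLift {Λ : Type u} (X : TransSys.{u, u1, u2} Λ) (hCSA : CSA1 X.μ X.T)
    (a : Λ) (f : (dSys a).Hom X) :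
    ∃! g : (cube 1 (fun _ => a)).Hom X, g.comp (dToC a) = f := by
  have ht1 : X.T (f.f0 false) [f.fa false] (f.f0 true) := by
    simpa using f.map false [false] true ⟨rfl, rfl, Or.inl rfl⟩
  have ht2 : X.T (f.f0 false) [f.fa true] (f.f0 true) := by
    simpa using f.map false [true] true ⟨rfl, rfl, Or.inr rfl⟩
  have hu : f.fa false = f.fa true :=
    hCSA _ _ _ _ ht1 ht2 ((f.label false).trans (f.label true).symm)
  refine ⟨⟨fun ε => f.f0 (ε 0), fun _ => f.fa false, fun _ => f.label false, ?_⟩, ?_, ?_⟩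
  · rintro α l β ⟨h1, h2, h3, h4⟩
    have hl : l = [0] := list_fin_one l h1 h2
    subst hl
    have hα : α 0 ≠ β 0 := (h4 0).2 (by simp)
    have hα2 : α 0 ≤ β 0 := h3 0
    have e1 : α 0 = false := by revert hα hα2; cases α 0 <;> cases β 0 <;> simp
    have e2 : β 0 = true := by revert hα hα2; cases α 0 <;> cases β 0 <;> simp
    show X.T (f.f0 (α 0)) [f.fa false] (f.f0 (β 0))
    rw [e1, e2]
    exact ht1
  · refine TransSys.Hom.ext' ?_ ?_
    · rfl
    · funext b
      cases b
      · rfl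
      · exact hu
  · intro g' hg'
    have h0 := congrArg TransSys.Hom.f0 hg'
    have ha := congrArg TransSys.Hom.fa hg'
    refine TransSys.Hom.ext' ?_ ?_
    · funext ε
      have : ε = fun _ => ε 0 := funext fun i => by rw [Subsingleton.elim i 0]
      rw [this]
      exact congrFun h0 (ε 0)
    · funext i
      rw [Subsingleton.elim i 0]
      exact congrFun ha false

theorem csa1_of_orth {Λ : Type u} (X : TransSys.{u, u1, u2} Λ)
    (horth : ∀ a : Λ, ∀ f : (dSys a).Hom X,
      ∃! g : (cube 1 (fun _ => a)).Hom X, g.comp (dToC a) = f) :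
    CSA1 X.μ X.T := by
  intro α β u u' h h' hμ
  obtain ⟨g, hg, -⟩ := horth (X.μ u)
    { f0 := fun b => if b then β else α
      fa := fun b => if b then u' else u
      label := by intro x; cases x <;> simp [hμ.symm]
      map := by rintro x l y ⟨rfl, rfl, h2 | h2⟩ <;> subst h2 <;> simpa }
  have h1 := congrArg TransSys.Hom.fa hg
  have e1 : g.fa 0 = u := congrFun h1 false
  have e2 : g.fa 0 = u' := congrFun h1 true
  exact e1 ▸ e2


theorem perm_of_nodup {γ : Type*} {l₁ l₂ : List γ} (h₁ : l₁.Nodup) (h₂ : l₂.Nodup)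
    (h : ∀ a, a ∈ l₁ ↔ a ∈ l₂) : l₁.Perm l₂ :=
  (List.perm_ext_iff_of_nodup h₁ h₂).2 h

theorem mem_take_finRange (n p : ℕ) (i : Fin n) : i ∈ (List.finRange n).take p ↔ i.1 < p := by
  simp only [List.mem_iff_getElem, List.getElem_take, List.length_take,
    List.getElem_finRange, List.length_finRange]
  constructor
  · rintro ⟨k, hk, rfl⟩; simp at hk ⊢; omega
  · intro h; exact ⟨i.1, by omega, by simp⟩

theorem mem_drop_finRange (n p : ℕ) (i : Fin n) : i ∈ (List.finRange n).drop p ↔ p ≤ i.1 := by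
  simp only [List.mem_iff_getElem, List.getElem_drop, List.length_drop,
    List.getElem_finRange, List.length_finRange]
  constructor
  · rintro ⟨k, hk, rfl⟩; simp
  · intro h; exact ⟨i.1 - p, by omega, Fin.ext (by simp; omega)⟩

/-- The list of indices where `ε` is `true`. -/
def idxT (n : ℕ) (ε : Fin n → Bool) : List (Fin n) := (List.finRange n).filter (fun i => ε i)

theorem mem_idxT {n : ℕ} {ε : Fin n → Bool} {i : Fin n} : i ∈ idxT n ε ↔ ε i = true := by
  simp [idxT]

theorem nodup_idxT (n : ℕ) (ε : Fin n → Bool) : (idxT n ε).Nodup :=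
  (List.nodup_finRange n).filter _

theorem idxT_ne_nil {n : ℕ} {ε : Fin n → Bool} (h : ε ≠ fun _ => false) : idxT n ε ≠ [] := by
  obtain ⟨i, hi⟩ : ∃ i, ε i = true := by
    by_contra hc
    push_neg at hc
    exact h (funext fun i => by simpa using hc i)
  exact List.ne_nil_of_mem (mem_idxT.2 hi)

theorem idxT_eq_nil {n : ℕ} {ε : Fin n → Bool} (h : ∀ i, ε i = false) : idxT n ε = [] := by
  simp only [idxT, List.filter_eq_nil_iff]
  intro i _
  simp [h i]

theorem idxT_eq_finRange {n : ℕ} {ε : Fin n → Bool} (h : ∀ i, ε i = true) :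
    idxT n ε = List.finRange n :=
  List.filter_eq_self.mpr fun i _ => h i

theorem not_all_false {n : ℕ} {ε : Fin n → Bool} (h : ε ≠ fun _ => true) :
    (fun i => !ε i) ≠ (fun _ : Fin n => false) :=
  fun hc => h (funext fun i => by have := congrFun hc i; simpa using this)

theorem idxT_append_perm (n : ℕ) (ε : Fin n → Bool) :
    (idxT n ε ++ idxT n (fun i => !ε i)).Perm (List.finRange n) := by
  refine perm_of_nodup (List.Nodup.append (nodup_idxT _ _) (nodup_idxT _ _) ?_)
    (List.nodup_finRange n) ?_
  · intro i hi hi'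
    rw [mem_idxT] at hi hi'
    simp [hi] at hi'
  · intro i
    simp only [List.mem_append, mem_idxT, List.mem_finRange, iff_true]
    cases h : ε i <;> simp

theorem cubeT_from_zero {n : ℕ} {ε : Fin n → Bool} (h : ε ≠ fun _ => false) :
    CubeT n (fun _ => false) (idxT n ε) ε :=
  ⟨idxT_ne_nil h, nodup_idxT n ε, fun i => Bool.false_le _, fun i => by
    rw [mem_idxT]; cases h' : ε i <;> simp [h']⟩

theorem cubeT_to_one {n : ℕ} {ε : Fin n → Bool} (h : ε ≠ fun _ => true) :
    CubeT n ε (idxT n (fun i => !ε i)) (fun _ => true) :=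
  ⟨idxT_ne_nil (not_all_false h), nodup_idxT _ _, fun i => Bool.le_true _, fun i => by
    rw [mem_idxT]; cases h' : ε i <;> simp [h']⟩

theorem bool_lt {x y : Bool} (hle : x ≤ y) (hne : x ≠ y) : x = false ∧ y = true := by
  revert hle hne; cases x <;> cases y <;> decide

theorem ne_false_mono {n : ℕ} {ε ε' : Fin n → Bool} (hle : ∀ i, ε i ≤ ε' i)
    (h : ε ≠ fun _ => false) : ε' ≠ fun _ => false := by
  intro hc
  apply h
  funext i
  have h2 := hle i
  rw [hc] at h2
  revert h2
  cases ε i <;> simp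

theorem ne_true_mono {n : ℕ} {ε ε' : Fin n → Bool} (hle : ∀ i, ε i ≤ ε' i)
    (h : ε' ≠ fun _ => true) : ε ≠ fun _ => true := by
  intro hc
  apply h
  funext i
  have h2 := hle i
  rw [hc] at h2
  revert h2
  cases ε' i <;> simp


theorem cubeLift {Λ : Type u} (X : TransSys.{u, u1, u2} Λ)
    (hne : ∀ (α : X.S) (l : List X.L) (β : X.S), X.T α l β → l ≠ [])
    (hmul : MultisetAxiom X.T) (hcoh : CoherenceAxiom X.T)
    (hUIS : UniqueIntermediate X.T) (n : ℕ) (hn : 2 ≤ n) (a : Fin n → Λ)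
    (f : (cubeExt n a).Hom X) :
    ∃! g : (cube n a).Hom X, g.comp (extIncl n a) = f := by
  classical
  have hfr_ne : List.finRange n ≠ [] := by
    simp only [ne_eq, List.finRange_eq_nil_iff]
    omega
  set z : (cubeExt n a).S := ⟨fun _ => false, Or.inl rfl⟩ with hzdef
  set o : (cubeExt n a).S := ⟨fun _ => true, Or.inr rfl⟩ with hodef
  set w : Fin n → X.L := f.fa with hwdef
  set α : X.S := f.f0 z with hαdef
  set β : X.S := f.f0 o with hβdef
  have hT : X.T α ((List.finRange n).map w) β :=
    f.map z (List.finRange n) o ⟨rfl, rfl, hfr_ne, List.nodup_finRange n,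
      fun i => List.mem_finRange i⟩
  have Tsplit : ∀ ε : Fin n → Bool,
      X.T α ((idxT n ε).map w ++ (idxT n (fun i => !ε i)).map w) β := by
    intro ε
    refine hmul _ _ _ _ ?_ hT
    have hp := (idxT_append_perm n ε).map w
    rw [List.map_append] at hp
    exact hp.symm
  have exu : ∀ ε : Fin n → Bool, ∃! ν : X.S,
      (((idxT n ε).map w = [] ∧ α = ν) ∨ X.T α ((idxT n ε).map w) ν) ∧
      (((idxT n (fun i => !ε i)).map w = [] ∧ ν = β) ∨
        X.T ν ((idxT n (fun i => !ε i)).map w) β) := by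
    intro ε
    by_cases h0 : ε = fun _ => false
    · have hnil : idxT n ε = [] := idxT_eq_nil (fun i => congrFun h0 i)
      refine ⟨α, ⟨Or.inl ⟨by rw [hnil]; rfl, rfl⟩, Or.inr ?_⟩, ?_⟩
      · have hsp := Tsplit ε
        rw [hnil] at hsp
        simpa using hsp
      · rintro ν ⟨h1 | h1, -⟩
        · exact h1.2.symm
        · rw [hnil] at h1
          exact absurd rfl (hne _ _ _ h1)
    by_cases h1 : ε = fun _ => true
    · have hnil : idxT n (fun i => !ε i) = [] :=
        idxT_eq_nil (fun i => by rw [h1]; rfl)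
      have hfull : idxT n ε = List.finRange n :=
        idxT_eq_finRange (fun i => congrFun h1 i)
      refine ⟨β, ⟨Or.inr (by rw [hfull]; exact hT), Or.inl ⟨by rw [hnil]; rfl, rfl⟩⟩, ?_⟩
      rintro ν ⟨-, h2 | h2⟩
      · exact h2.2
      · rw [hnil] at h2
        exact absurd rfl (hne _ _ _ h2)
    · have hne1 : (idxT n ε).map w ≠ [] := by
        simp only [ne_eq, List.map_eq_nil_iff]
        exact idxT_ne_nil h0
      have hne2 : (idxT n (fun i => !ε i)).map w ≠ [] := by
        simp only [ne_eq, List.map_eq_nil_iff]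
        exact idxT_ne_nil (not_all_false h1)
      obtain ⟨ν, ⟨t1, t2⟩, hu⟩ := hUIS α β _ _ hne1 hne2 (Tsplit ε)
      refine ⟨ν, ⟨Or.inr t1, Or.inr t2⟩, ?_⟩
      rintro ν' ⟨h1' | h1', h2' | h2'⟩
      · exact absurd h1'.1 hne1
      · exact absurd h1'.1 hne1
      · exact absurd h2'.1 hne2
      · exact hu ν' ⟨h1', h2'⟩
  choose gf hQ using fun ε => (exu ε).exists
  have hQ1 := fun ε => (hQ ε).1
  have hQ2 := fun ε => (hQ ε).2
  have K1 : ∀ ε : Fin n → Bool, ε ≠ (fun _ => false) →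
      X.T α ((idxT n ε).map w) (gf ε) := by
    intro ε h
    rcases hQ1 ε with h' | h'
    · exact absurd (List.map_eq_nil_iff.mp h'.1) (idxT_ne_nil h)
    · exact h'
  have K2 : ∀ ε : Fin n → Bool, ε ≠ (fun _ => true) →
      X.T (gf ε) ((idxT n (fun i => !ε i)).map w) β := by
    intro ε h
    rcases hQ2 ε with h' | h'
    · exact absurd (List.map_eq_nil_iff.mp h'.1) (idxT_ne_nil (not_all_false h))
    · exact h'
  have ge0 : gf (fun _ => false) = α := by
    rcases hQ1 (fun _ => false) with h' | h'
    · exact h'.2.symm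
    · rw [idxT_eq_nil (fun i => rfl)] at h'
      exact absurd rfl (hne _ _ _ h')
  have ge1 : gf (fun _ => true) = β := by
    rcases hQ2 (fun _ => true) with h' | h'
    · exact h'.2
    · rw [idxT_eq_nil (ε := fun i => !true) (fun i => rfl)] at h'
      exact absurd rfl (hne _ _ _ h')
  refine ⟨⟨gf, w, f.label, ?_⟩, ?_, ?_⟩
  · rintro ε l ε' ⟨hlne, hlnd, hle, hmem⟩
    by_cases hε0 : ε = fun _ => false
    · -- from the bottom vertex
      have hε'0 : ε' ≠ fun _ => false := by
        obtain ⟨i, hi⟩ := List.exists_mem_of_ne_nil l hlne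
        have h2 := (bool_lt (hle i) ((hmem i).2 hi)).2
        intro hc
        rw [hc] at h2
        simp at h2
      have hperm : l.Perm (idxT n ε') := by
        refine perm_of_nodup hlnd (nodup_idxT _ _) (fun i => ?_)
        rw [mem_idxT, ← hmem i, hε0]
        cases h' : ε' i <;> simp [h']
      show X.T (gf ε) (l.map w) (gf ε')
      rw [hε0, ge0]
      exact hmul _ _ _ _ ((hperm.map w).symm) (K1 ε' hε'0)
    by_cases hε'1 : ε' = fun _ => true
    · have hε1 : ε ≠ fun _ => true := by
        obtain ⟨i, hi⟩ := List.exists_mem_of_ne_nil l hlne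
        have h2 := (bool_lt (hle i) ((hmem i).2 hi)).1
        intro hc
        rw [hc] at h2
        simp at h2
      have hperm : l.Perm (idxT n (fun i => !ε i)) := by
        refine perm_of_nodup hlnd (nodup_idxT _ _) (fun i => ?_)
        rw [mem_idxT, ← hmem i, hε'1]
        cases h' : ε i <;> simp [h']
      show X.T (gf ε) (l.map w) (gf ε')
      rw [hε'1, ge1]
      exact hmul _ _ _ _ ((hperm.map w).symm) (K2 ε hε1)
    · -- the middle case, via the Coherence axiom
      have hε'0 : ε' ≠ fun _ => false := ne_false_mono hle hε0
      have hε1 : ε ≠ fun _ => true := ne_true_mono hle hε'1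
      have hdisj1 : ∀ i : Fin n, i ∈ idxT n ε → i ∈ l → False := by
        intro i hi hil
        have h2 := bool_lt (hle i) ((hmem i).2 hil)
        rw [mem_idxT] at hi
        rw [hi] at h2
        simp at h2
      have pAB : (idxT n ε ++ l).Perm (idxT n ε') := by
        refine perm_of_nodup (List.Nodup.append (nodup_idxT _ _) hlnd hdisj1)
          (nodup_idxT _ _) (fun i => ?_)
        simp only [List.mem_append, mem_idxT, ← hmem i]
        have := hle i
        revert this
        cases h' : ε i <;> cases h'' : ε' i <;> simp
      have hdisj2 : ∀ i : Fin n, i ∈ l → i ∈ idxT n (fun j => !ε' j) → False := by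
        intro i hil hi
        have h2 := bool_lt (hle i) ((hmem i).2 hil)
        rw [mem_idxT] at hi
        rw [h2.2] at hi
        simp at hi
      have pBC : (l ++ idxT n (fun i => !ε' i)).Perm (idxT n (fun i => !ε i)) := by
        refine perm_of_nodup (List.Nodup.append hlnd (nodup_idxT _ _) hdisj2)
          (nodup_idxT _ _) (fun i => ?_)
        simp only [List.mem_append, mem_idxT, ← hmem i]
        have := hle i
        revert this
        cases h' : ε i <;> cases h'' : ε' i <;> simp
      have pABC : ((idxT n ε ++ l) ++ idxT n (fun i => !ε' i)).Perm (List.finRange n) := by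
        rw [List.append_assoc]
        exact ((pBC.append_left (idxT n ε)).trans (idxT_append_perm n ε))
      have h1 : X.T α ((idxT n ε).map w ++ l.map w ++ (idxT n (fun i => !ε' i)).map w) β := by
        refine hmul _ _ _ _ ?_ hT
        have hp := pABC.map w
        rw [List.map_append, List.map_append] at hp
        exact hp.symm
      have h2 : X.T α ((idxT n ε).map w) (gf ε) := K1 ε hε0
      have h3 : X.T (gf ε) (l.map w ++ (idxT n (fun i => !ε' i)).map w) β := by
        refine hmul _ _ _ _ ?_ (K2 ε hε1)
        have hp := pBC.map w
        rw [List.map_append] at hp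
        exact hp.symm
      have h4 : X.T α ((idxT n ε).map w ++ l.map w) (gf ε') := by
        refine hmul _ _ _ _ ?_ (K1 ε' hε'0)
        have hp := pAB.map w
        rw [List.map_append] at hp
        exact hp.symm
      have h5 : X.T (gf ε') ((idxT n (fun i => !ε' i)).map w) β := K2 ε' hε'1
      have hAne : (idxT n ε).map w ≠ [] := by
        simp only [ne_eq, List.map_eq_nil_iff]
        exact idxT_ne_nil hε0
      have hBne : l.map w ≠ [] := by
        simp only [ne_eq, List.map_eq_nil_iff]
        exact hlne
      have hCne : (idxT n (fun i => !ε' i)).map w ≠ [] := by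
        simp only [ne_eq, List.map_eq_nil_iff]
        exact idxT_ne_nil (not_all_false hε'1)
      exact hcoh α β (gf ε) (gf ε') _ _ _ hAne hBne hCne h1 h2 h3 h4 h5
  · -- the composite is f
    refine TransSys.Hom.ext' ?_ rfl
    funext x
    show gf x.1 = f.f0 x
    rcases x with ⟨ε, hε | hε⟩
    · subst hε
      exact ge0
    · subst hε
      exact ge1
  · -- uniqueness of the lift
    intro g' hg'
    have hfa : g'.fa = w := congrArg TransSys.Hom.fa hg'
    have hf0z : g'.f0 (fun _ => false) = α := congrFun (congrArg TransSys.Hom.f0 hg') z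
    have hf0o : g'.f0 (fun _ => true) = β := congrFun (congrArg TransSys.Hom.f0 hg') o
    refine TransSys.Hom.ext' ?_ hfa
    funext ε
    refine (exu ε).unique ⟨?_, ?_⟩ (hQ ε)
    · by_cases hε0 : ε = fun _ => false
      · refine Or.inl ⟨by rw [idxT_eq_nil (fun i => congrFun hε0 i)]; rfl, ?_⟩
        rw [hε0]
        exact hf0z.symm
      · right
        have := g'.map _ _ _ (cubeT_from_zero hε0)
        rw [hfa, hf0z] at this
        exact this
    · by_cases hε1 : ε = fun _ => true
      · refine Or.inl ⟨by rw [idxT_eq_nil (ε := fun i => !ε i) (fun i => by rw [hε1]; rfl)]; rfl, ?_⟩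
        rw [hε1]
        exact hf0o
      · right
        have := g'.map _ _ _ (cubeT_to_one hε1)
        rw [hfa, hf0o] at this
        exact this


open Classical in
/-- The canonical morphism `C_n^ext → X` associated with a transition of `X`
with `n` actions. -/
noncomputable def extHom {Λ : Type u} (X : TransSys.{u, u1, u2} Λ) (n : ℕ) (hn : 0 < n)
    (hmul : MultisetAxiom X.T) (w : Fin n → X.L) (α β : X.S)
    (hT : X.T α ((List.finRange n).map w) β) :
    (cubeExt n (fun i => X.μ (w i))).Hom X where
  f0 := fun x => if x.1 = (fun _ : Fin n => false) then α else β
  fa := w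
  label := fun _ => rfl
  map := by
    rintro x l y ⟨hx, hy, hlne, hlnd, hall⟩
    have hy' : ¬ y.1 = (fun _ : Fin n => false) := by
      rw [hy]
      intro hc
      have := congrFun hc ⟨0, hn⟩
      simp at this
    show X.T (if x.1 = (fun _ : Fin n => false) then α else β) (l.map w)
      (if y.1 = (fun _ : Fin n => false) then α else β)
    rw [if_pos hx, if_neg hy']
    refine hmul _ _ _ _ ?_ hT
    exact ((perm_of_nodup (List.nodup_finRange n) hlnd (fun i => by simp [hall i])).map w)

theorem extHom_f0_zero {Λ : Type u} (X : TransSys.{u, u1, u2} Λ) (n : ℕ) (hn : 0 < n)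
    (hmul : MultisetAxiom X.T) (w : Fin n → X.L) (α β : X.S)
    (hT : X.T α ((List.finRange n).map w) β) :
    (extHom X n hn hmul w α β hT).f0 ⟨fun _ => false, Or.inl rfl⟩ = α := if_pos rfl

theorem extHom_f0_one {Λ : Type u} (X : TransSys.{u, u1, u2} Λ) (n : ℕ) (hn : 0 < n)
    (hmul : MultisetAxiom X.T) (w : Fin n → X.L) (α β : X.S)
    (hT : X.T α ((List.finRange n).map w) β) :
    (extHom X n hn hmul w α β hT).f0 ⟨fun _ => true, Or.inr rfl⟩ = β := by
  refine if_neg ?_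
  intro hc
  have := congrFun hc ⟨0, hn⟩
  simp at this

theorem uis_of_orth {Λ : Type u} (X : TransSys.{u, u1, u2} Λ)
    (hmul : MultisetAxiom X.T) (hcoh : CoherenceAxiom X.T)
    (horth : ∀ (n : ℕ), 2 ≤ n → ∀ (a : Fin n → Λ), ∀ f : (cubeExt n a).Hom X,
      ∃! g : (cube n a).Hom X, g.comp (extIncl n a) = f) :
    UniqueIntermediate X.T := by
  classical
  intro α β l₁ l₂ h1 h2 hT
  set n := (l₁ ++ l₂).length with hndef
  have hp1 : 0 < l₁.length := List.length_pos_iff.2 h1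
  have hp2 : 0 < l₂.length := List.length_pos_iff.2 h2
  have hlen : n = l₁.length + l₂.length := by rw [hndef, List.length_append]
  set p := l₁.length with hpdef
  have hn : 2 ≤ n := by omega
  set w : Fin n → X.L := (l₁ ++ l₂).get with hwdef
  have hW : (List.finRange n).map w = l₁ ++ l₂ := List.map_get_finRange (l₁ ++ l₂)
  have hT' : X.T α ((List.finRange n).map w) β := by rw [hW]; exact hT
  obtain ⟨g, hg, hguniq⟩ := horth n hn (fun i => X.μ (w i))
    (extHom X n (by omega) hmul w α β hT')
  set εp : Fin n → Bool := fun i => decide (i.1 < p) with hεpdef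
  have hεp0 : εp ≠ fun _ => false := by
    intro hc
    have := congrFun hc ⟨0, by omega⟩
    simp only [hεpdef] at this
    simp at this
    omega
  have hεp1 : εp ≠ fun _ => true := by
    intro hc
    have := congrFun hc ⟨p, by omega⟩
    simp only [hεpdef] at this
    simp at this
  have hidx1 : (idxT n εp).Perm ((List.finRange n).take p) := by
    refine perm_of_nodup (nodup_idxT _ _)
      ((List.take_sublist _ _).nodup (List.nodup_finRange n)) (fun i => ?_)
    rw [mem_idxT, mem_take_finRange, hεpdef]
    simp
  have hmap1 : ((idxT n εp).map w).Perm l₁ := by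
    have hp' := hidx1.map w
    rwa [List.map_take, hW, hpdef, List.take_left] at hp'
  have hidx2 : (idxT n (fun i => !εp i)).Perm ((List.finRange n).drop p) := by
    refine perm_of_nodup (nodup_idxT _ _)
      ((List.drop_sublist _ _).nodup (List.nodup_finRange n)) (fun i => ?_)
    rw [mem_idxT, mem_drop_finRange, hεpdef]
    simp
  have hmap2 : ((idxT n (fun i => !εp i)).map w).Perm l₂ := by
    have hp' := hidx2.map w
    rwa [List.map_drop, hW, hpdef, List.drop_left] at hp'
  have hfa : g.fa = w := congrArg TransSys.Hom.fa hg
  have hα0 : g.f0 (fun _ => false) = α :=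
    (congrFun (congrArg TransSys.Hom.f0 hg) ⟨fun _ => false, Or.inl rfl⟩).trans
      (extHom_f0_zero X n (by omega) hmul w α β hT')
  have hβ0 : g.f0 (fun _ => true) = β :=
    (congrFun (congrArg TransSys.Hom.f0 hg) ⟨fun _ => true, Or.inr rfl⟩).trans
      (extHom_f0_one X n (by omega) hmul w α β hT')
  have Kg1 : ∀ ε : Fin n → Bool, ε ≠ (fun _ => false) →
      X.T α ((idxT n ε).map w) (g.f0 ε) := by
    intro ε hε
    have htr := g.map _ _ _ (cubeT_from_zero hε)
    rwa [hfa, hα0] at htr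
  have Kg2 : ∀ ε : Fin n → Bool, ε ≠ (fun _ => true) →
      X.T (g.f0 ε) ((idxT n (fun i => !ε i)).map w) β := by
    intro ε hε
    have htr := g.map _ _ _ (cubeT_to_one hε)
    rwa [hfa, hβ0] at htr
  have hEx1 : X.T α l₁ (g.f0 εp) := hmul _ _ _ _ hmap1 (Kg1 εp hεp0)
  have hEx2 : X.T (g.f0 εp) l₂ β := hmul _ _ _ _ hmap2 (Kg2 εp hεp1)
  refine ⟨g.f0 εp, ⟨hEx1, hEx2⟩, ?_⟩
  rintro ν ⟨hν1, hν2⟩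
  have mapPf : ∀ (ε : Fin n → Bool) (l : List (Fin n)) (ε' : Fin n → Bool),
      CubeT n ε l ε' → X.T (if ε = εp then ν else g.f0 ε) (l.map g.fa)
        (if ε' = εp then ν else g.f0 ε') := by
    rintro ε l ε' ⟨hlne, hlnd, hle, hmem⟩
    rw [hfa]
    by_cases he : ε = εp
    · rw [if_pos he]
      subst he
      have he' : ¬ ε' = εp := by
        obtain ⟨i, hi⟩ := List.exists_mem_of_ne_nil l hlne
        intro hc
        exact ((hmem i).2 hi) (congrFun hc i).symm
      rw [if_neg he']
      by_cases hε'1 : ε' = fun _ => true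
      · subst hε'1
        rw [hβ0]
        have hperm : l.Perm (idxT n (fun i => !εp i)) := by
          refine perm_of_nodup hlnd (nodup_idxT _ _) (fun i => ?_)
          rw [mem_idxT, ← hmem i]
          cases h' : εp i <;> simp [h']
        exact hmul _ _ _ _ ((hperm.map w).trans hmap2).symm hν2
      · have hε'0 : ε' ≠ fun _ => false := ne_false_mono hle hεp0
        have pBC : (l ++ idxT n (fun i => !ε' i)).Perm (idxT n (fun i => !εp i)) := by
          refine perm_of_nodup (List.Nodup.append hlnd (nodup_idxT _ _) ?_)
            (nodup_idxT _ _) (fun i => ?_)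
          · intro i hil hi
            rw [mem_idxT] at hi
            rw [(bool_lt (hle i) ((hmem i).2 hil)).2] at hi
            simp at hi
          · simp only [List.mem_append, mem_idxT, ← hmem i]
            have hli := hle i
            revert hli
            cases h' : εp i <;> cases h'' : ε' i <;> simp
        have pAB : (idxT n εp ++ l).Perm (idxT n ε') := by
          refine perm_of_nodup (List.Nodup.append (nodup_idxT _ _) hlnd ?_)
            (nodup_idxT _ _) (fun i => ?_)
          · intro i hi hil
            rw [mem_idxT] at hi
            rw [(bool_lt (hle i) ((hmem i).2 hil)).1] at hi
            simp at hi
          · simp only [List.mem_append, mem_idxT, ← hmem i]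
            have hli := hle i
            revert hli
            cases h' : εp i <;> cases h'' : ε' i <;> simp
        have hBC : (l.map w ++ (idxT n (fun i => !ε' i)).map w).Perm l₂ := by
          have hp' := pBC.map w
          rw [List.map_append] at hp'
          exact hp'.trans hmap2
        have h1c : X.T α (l₁ ++ l.map w ++ (idxT n (fun i => !ε' i)).map w) β := by
          refine hmul _ _ (l₁ ++ l₂) _ ?_ hT
          rw [List.append_assoc]
          exact (hBC.append_left l₁).symm
        have h3c : X.T ν (l.map w ++ (idxT n (fun i => !ε' i)).map w) β :=
          hmul _ _ _ _ hBC.symm hν2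
        have h4c : X.T α (l₁ ++ l.map w) (g.f0 ε') := by
          refine hmul _ _ _ _ ?_ (Kg1 ε' hε'0)
          have hp' := pAB.map w
          rw [List.map_append] at hp'
          exact hp'.symm.trans (hmap1.append_right (l.map w))
        have h5c : X.T (g.f0 ε') ((idxT n (fun i => !ε' i)).map w) β := Kg2 ε' hε'1
        refine hcoh α β ν (g.f0 ε') l₁ (l.map w) _ h1 ?_ ?_ h1c hν1 h3c h4c h5c
        · simp [hlne]
        · simp only [ne_eq, List.map_eq_nil_iff]
          exact idxT_ne_nil (not_all_false hε'1)
    · rw [if_neg he]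
      by_cases he' : ε' = εp
      · rw [if_pos he']
        subst he'
        by_cases hε0 : ε = fun _ => false
        · subst hε0
          rw [hα0]
          have hperm : l.Perm (idxT n εp) := by
            refine perm_of_nodup hlnd (nodup_idxT _ _) (fun i => ?_)
            rw [mem_idxT, ← hmem i]
            cases h' : εp i <;> simp [h']
          exact hmul _ _ _ _ ((hperm.map w).trans hmap1).symm hν1
        · have pAB : (idxT n ε ++ l).Perm (idxT n εp) := by
            refine perm_of_nodup (List.Nodup.append (nodup_idxT _ _) hlnd ?_)
              (nodup_idxT _ _) (fun i => ?_)
            · intro i hi hil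
              rw [mem_idxT] at hi
              rw [(bool_lt (hle i) ((hmem i).2 hil)).1] at hi
              simp at hi
            · simp only [List.mem_append, mem_idxT, ← hmem i]
              have hli := hle i
              revert hli
              cases h' : ε i <;> cases h'' : εp i <;> simp
          have hAB : ((idxT n ε).map w ++ l.map w).Perm l₁ := by
            have hp' := pAB.map w
            rw [List.map_append] at hp'
            exact hp'.trans hmap1
          have h1c : X.T α ((idxT n ε).map w ++ l.map w ++ l₂) β :=
            hmul _ _ (l₁ ++ l₂) _ (hAB.append_right l₂).symm hT
          have h2c := Kg1 ε hε0
          have h3c : X.T (g.f0 ε) (l.map w ++ l₂) β := by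
            have hcube : CubeT n ε (l ++ idxT n (fun i => !εp i)) (fun _ => true) := by
              refine ⟨by simp [hlne], List.Nodup.append hlnd (nodup_idxT _ _) ?_,
                fun i => Bool.le_true _, fun i => ?_⟩
              · intro i hil hi
                rw [mem_idxT] at hi
                rw [(bool_lt (hle i) ((hmem i).2 hil)).2] at hi
                simp at hi
              · simp only [List.mem_append, mem_idxT, ← hmem i]
                have hli := hle i
                revert hli
                cases h' : ε i <;> cases h'' : εp i <;> simp
            have htr := g.map _ _ _ hcube
            rw [hfa, hβ0, List.map_append] at htr
            exact hmul _ _ _ _ (hmap2.append_left (l.map w)) htr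
          have h4c : X.T α ((idxT n ε).map w ++ l.map w) ν := hmul _ _ _ _ hAB.symm hν1
          refine hcoh α β (g.f0 ε) ν _ (l.map w) l₂ ?_ ?_ h2 h1c h2c h3c h4c hν2
          · simp only [ne_eq, List.map_eq_nil_iff]
            exact idxT_ne_nil hε0
          · simp [hlne]
      · rw [if_neg he']
        have htr := g.map _ _ _ (⟨hlne, hlnd, hle, hmem⟩ : CubeT n ε l ε')
        rwa [hfa] at htr
  have hcomp : (⟨fun ε => if ε = εp then ν else g.f0 ε, g.fa, g.label, mapPf⟩ :
      (cube n (fun i => X.μ (w i))).Hom X).comp (extIncl n (fun i => X.μ (w i))) =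
      extHom X n (by omega) hmul w α β hT' := by
    refine (TransSys.Hom.ext' ?_ ?_).trans hg
    · funext x
      show (if x.1 = εp then ν else g.f0 x.1) = g.f0 x.1
      have hxne : ¬ x.1 = εp := by
        rcases x.2 with hx | hx <;> rw [hx]
        · exact fun hc => hεp0 hc.symm
        · exact fun hc => hεp1 hc.symm
      rw [if_neg hxne]
    · rfl
  have hfin := hguniq _ hcomp
  have hval := congrFun (congrArg TransSys.Hom.f0 hfin) εp
  simpa using hval
/-- A weak higher dimensional transition system `X` is a higher dimensional
transition system (i.e. satisfies CSA1 and the Unique intermediate state axiom)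
if and only if it is orthogonal to the canonical morphisms `D[a] → C_1[a]` for
all `a ∈ Σ` and to the inclusions `C_n[a_1,…,a_n]^ext ⊆ C_n[a_1,…,a_n]` for
all `n ≥ 2` and `a_1,…,a_n ∈ Σ`: orthogonality to `g : A → B` means that
every morphism `A → X` factors uniquely through `g`. -/
theorem hdts_iff_orthogonal {Λ : Type u} (X : TransSys.{u, u1, u2} Λ)
    (hne : ∀ α l β, X.T α l β → l ≠ [])
    (hmul : MultisetAxiom X.T) (hcoh : CoherenceAxiom X.T) :
    (CSA1 X.μ X.T ∧ UniqueIntermediate X.T) ↔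
      ((∀ a : Λ, ∀ f : (dSys a).Hom X,
          ∃! g : (cube 1 (fun _ => a)).Hom X, g.comp (dToC a) = f) ∧
        ∀ (n : ℕ), 2 ≤ n → ∀ (a : Fin n → Λ), ∀ f : (cubeExt n a).Hom X,
          ∃! g : (cube n a).Hom X, g.comp (extIncl n a) = f) := by
  constructor
  · rintro ⟨hCSA, hUIS⟩
    exact ⟨fun a f => dLift X hCSA a f,
      fun n hn a f => cubeLift X hne hmul hcoh hUIS n hn a f⟩
  · rintro ⟨ho1, ho2⟩
    exact ⟨csa1_of_orth X ho1, uis_of_orth X hmul hcoh ho2⟩
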